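/- (Proposition characterization, Hopf–Lax form.) Let J be a nonempty closed interval of ℝ, and suppose u_T is left continuous, takes values in J, and satisfies the Oleinik condition (O) at T. Let π_{u_T}(x) := x − T·f'(u_T(x)). Then for every Lipschitz function U_o : ℝ → ℝ the following are equivalent: (a) S_T U_o = U_T and U_o'(x) ∈ J for a.e. x; (b) (i) U_o(x) ≥ U_o^♭(x) for all x ∈ ℝ, (ii) U_o = U_o^♭ on the closure of π_{u_T}(ℝ), and (iii) U_o'(x) ∈ J for a.e. x. -/

import Mathlib

open Filter MeasureTheory

/-- Condition (f): `f` is `C²`, strongly convex (`f'' > 0` everywhere), and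
`f' → ∓∞` at `∓∞`. -/
def CondF (f : ℝ → ℝ) : Prop :=
  ContDiff ℝ 2 f ∧ (∀ x, 0 < deriv (deriv f) x) ∧
    Tendsto (deriv f) atBot atBot ∧ Tendsto (deriv f) atTop atTop

/-- The Legendre transform `f*(y) = sup_x (y·x − f(x))`. -/
noncomputable def legendre (f : ℝ → ℝ) (y : ℝ) : ℝ :=
  sSup (Set.range fun x => y * x - f x)

/-- `U_T(x) = ∫_{x̌}^x u_T`. -/
noncomputable def UT (uT : ℝ → ℝ) (xc x : ℝ) : ℝ := ∫ ξ in xc..x, uT ξ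

/-- `U_o^♭(x) = sup_ξ [U_T(ξ) − T f*((ξ−x)/T)]`. -/
noncomputable def Uflat (f : ℝ → ℝ) (T : ℝ) (uT : ℝ → ℝ) (xc x : ℝ) : ℝ :=
  sSup (Set.range fun ξ => UT uT xc ξ - T * legendre f ((ξ - x) / T))

/-- `M(x)`: the set of maximizers in the definition of `U_o^♭(x)`. -/
def MSet (f : ℝ → ℝ) (T : ℝ) (uT : ℝ → ℝ) (xc x : ℝ) : Set ℝ :=
  {ξ | UT uT xc ξ = Uflat f T uT xc x + T * legendre f ((ξ - x) / T)}

/-- Oleinik condition (O) at `T`. -/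
def Oleinik (f : ℝ → ℝ) (T : ℝ) (uT : ℝ → ℝ) : Prop :=
  ∀ x Δ : ℝ, 0 < Δ → deriv f (uT (x + Δ)) - deriv f (uT x) ≤ Δ / T

/-- The Hopf–Lax operator at time `T`: `(S_T U)(x) = inf_ξ [U(ξ) + T f*((x−ξ)/T)]`. -/
noncomputable def HopfLax (f : ℝ → ℝ) (T : ℝ) (U : ℝ → ℝ) (x : ℝ) : ℝ :=
  sInf (Set.range fun ξ => U ξ + T * legendre f ((x - ξ) / T))

/-- Left continuity of a real function. -/
def LeftCts (u : ℝ → ℝ) : Prop :=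
  ∀ x, Tendsto u (nhdsWithin x (Set.Iio x)) (nhds (u x))

/-- `II_T(U_T; J)`: Lipschitz functions with a.e. derivative in `J` evolving into `U_T`
under the Hopf–Lax semigroup. -/
def IIT (f : ℝ → ℝ) (T : ℝ) (uT : ℝ → ℝ) (xc : ℝ) (J : Set ℝ) : Set (ℝ → ℝ) :=
  {U | (∃ K, LipschitzWith K U) ∧ (∀ᵐ x ∂volume, deriv U x ∈ J) ∧
    ∀ x, HopfLax f T U x = UT uT xc x}

/-- `U_o^♯(x) = sup { U(x) : U ∈ II_T(U_T; J) }`. -/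
noncomputable def Usharp (f : ℝ → ℝ) (T : ℝ) (uT : ℝ → ℝ) (xc : ℝ) (J : Set ℝ) (x : ℝ) : ℝ :=
  sSup ((fun U : ℝ → ℝ => U x) '' IIT f T uT xc J)

section Leg
variable {f : ℝ → ℝ}

lemma g_cont (hf : CondF f) : Continuous (deriv f) := hf.1.continuous_deriv one_le_two

lemma g_mono (hf : CondF f) : StrictMono (deriv f) := strictMono_of_deriv_pos hf.2.1

lemma g_surj (hf : CondF f) : Function.Surjective (deriv f) :=
  (g_cont hf).surjective hf.2.2.2 hf.2.2.1

/-- the inverse of f' -/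
noncomputable def hInv (hf : CondF f) : ℝ → ℝ :=
  ((g_mono hf).orderIsoOfSurjective _ (g_surj hf)).symm

lemma hInv_g (hf : CondF f) (x : ℝ) : hInv hf (deriv f x) = x :=
  ((g_mono hf).orderIsoOfSurjective _ (g_surj hf)).symm_apply_apply _

lemma g_hInv (hf : CondF f) (y : ℝ) : deriv f (hInv hf y) = y :=
  ((g_mono hf).orderIsoOfSurjective _ (g_surj hf)).apply_symm_apply _

lemma hInv_mono (hf : CondF f) : StrictMono (hInv hf) :=
  ((g_mono hf).orderIsoOfSurjective _ (g_surj hf)).symm.strictMono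

lemma hInv_cont (hf : CondF f) : Continuous (hInv hf) :=
  ((g_mono hf).orderIsoOfSurjective _ (g_surj hf)).symm.continuous

/-- convexity inequality -/
lemma conv_ineq (hf : CondF f) (a b : ℝ) : deriv f a * (b - a) ≤ f b - f a := by
  rcases lt_trichotomy a b with hab | rfl | hab
  · obtain ⟨c, hc, hc2⟩ := exists_deriv_eq_slope f hab
      (hf.1.continuous.continuousOn) ((hf.1.differentiable two_ne_zero).differentiableOn)
    have h1 : deriv f a ≤ deriv f c := ((g_mono hf).le_iff_le).2 (le_of_lt hc.1)
    have hba : (0:ℝ) < b - a := by linarith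
    have h4 : deriv f c * (b - a) = f b - f a := by
      rw [hc2]; field_simp
    nlinarith [mul_le_mul_of_nonneg_right h1 (le_of_lt hba)]
  · simp
  · obtain ⟨c, hc, hc2⟩ := exists_deriv_eq_slope f hab
      (hf.1.continuous.continuousOn) ((hf.1.differentiable two_ne_zero).differentiableOn)
    have h1 : deriv f c ≤ deriv f a := ((g_mono hf).le_iff_le).2 (le_of_lt hc.2)
    have hba : (0:ℝ) < a - b := by linarith
    have h4 : deriv f c * (a - b) = f a - f b := by
      rw [hc2]; field_simp
    nlinarith [mul_le_mul_of_nonneg_right h1 (le_of_lt hba)]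

lemma legendre_isGreatest (hf : CondF f) (y : ℝ) :
    IsGreatest (Set.range fun x => y * x - f x) (y * hInv hf y - f (hInv hf y)) := by
  constructor
  · exact ⟨hInv hf y, rfl⟩
  · rintro _ ⟨x, rfl⟩
    have h := conv_ineq hf (hInv hf y) x
    rw [g_hInv hf] at h
    show y * x - f x ≤ _
    nlinarith [h]

lemma legendre_eq (hf : CondF f) (y : ℝ) :
    legendre f y = y * hInv hf y - f (hInv hf y) :=
  (legendre_isGreatest hf y).csSup_eq

lemma legendre_bddAbove (hf : CondF f) (y : ℝ) :
    BddAbove (Set.range fun x => y * x - f x) :=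
  (legendre_isGreatest hf y).bddAbove

lemma legendre_lb (hf : CondF f) (y b : ℝ) : y * b - f b ≤ legendre f y := by
  rw [legendre_eq hf]
  exact (legendre_isGreatest hf y).2 ⟨b, rfl⟩

/-- gradient inequality for f* -/
lemma lgrad (hf : CondF f) (y z : ℝ) :
    (z - y) * hInv hf y ≤ legendre f z - legendre f y := by
  have h1 := legendre_lb hf z (hInv hf y)
  rw [legendre_eq hf y]
  nlinarith [h1]

lemma hasDerivAt_legendre (hf : CondF f) (y : ℝ) :
    HasDerivAt (legendre f) (hInv hf y) y := by
  rw [hasDerivAt_iff_isLittleO, Asymptotics.isLittleO_iff]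
  intro c hc
  obtain ⟨δ, hδ, hball⟩ := Metric.continuousAt_iff.1 (hInv_cont hf).continuousAt c hc
  filter_upwards [Metric.ball_mem_nhds y hδ] with z hz
  have h1 := lgrad hf y z
  have h2 := lgrad hf z y
  have hbz : |hInv hf z - hInv hf y| ≤ c := by
    have := hball hz
    rw [Real.dist_eq] at this
    exact le_of_lt this
  simp only [smul_eq_mul, Real.norm_eq_abs]
  rw [abs_le] at hbz ⊢
  constructor
  · have h0 : (0:ℝ) ≤ legendre f z - legendre f y - (z - y) * hInv hf y := by nlinarith
    nlinarith [abs_nonneg (z - y), hc.le]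
  · have hup : legendre f z - legendre f y - (z - y) * hInv hf y
        ≤ (z - y) * (hInv hf z - hInv hf y) := by nlinarith
    calc legendre f z - legendre f y - (z - y) * hInv hf y
        ≤ (z - y) * (hInv hf z - hInv hf y) := hup
      _ ≤ |z - y| * |hInv hf z - hInv hf y| := by
          calc (z - y) * (hInv hf z - hInv hf y)
              ≤ |(z - y) * (hInv hf z - hInv hf y)| := le_abs_self _
            _ = |z - y| * |hInv hf z - hInv hf y| := abs_mul _ _
      _ ≤ c * |z - y| := by
          rw [mul_comm]
          exact mul_le_mul_of_nonneg_right (abs_le.2 hbz) (abs_nonneg _)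

lemma legendre_cont (hf : CondF f) : Continuous (legendre f) :=
  continuous_iff_continuousAt.2 fun y => (hasDerivAt_legendre hf y).continuousAt

end Leg

section Main
variable {f : ℝ → ℝ} {T : ℝ} {uT : ℝ → ℝ} {C : ℝ}

/-- FTC for s ↦ T f*((s-c)/T) -/
lemma ftc_leg (hf : CondF f) (hT : 0 < T) (c a b : ℝ) :
    ∫ s in a..b, hInv hf ((s - c) / T)
      = T * legendre f ((b - c) / T) - T * legendre f ((a - c) / T) := by
  have hd : ∀ s ∈ Set.uIcc a b,
      HasDerivAt (fun s => T * legendre f ((s - c) / T)) (hInv hf ((s - c) / T)) s := by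
    intro s _
    have h1 : HasDerivAt (fun s : ℝ => (s - c) / T) (1 / T) s := by
      simpa using ((hasDerivAt_id s).sub_const c).div_const T
    have h2 := (hasDerivAt_legendre hf ((s - c) / T)).comp s h1
    have h3 := h2.const_mul T
    exact h3.congr_deriv (by field_simp [ne_of_gt hT])
  have hi : IntervalIntegrable (fun s => hInv hf ((s - c) / T)) volume a b :=
    (((hInv_cont hf).comp (by continuity)).intervalIntegrable a b)
  simpa using intervalIntegral.integral_eq_sub_of_hasDerivAt hd hi

lemma uT_intInt (huT : Measurable uT) (hC : ∀ x, |uT x| ≤ C) (a b : ℝ) : IntervalIntegrable uT volume a b := by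
  have : ∀ s ∈ Set.uIcc a b, ‖uT s‖ ≤ C := fun s _ => by
    rw [Real.norm_eq_abs]; exact hC s
  exact (intervalIntegrable_const (c := C)).mono_fun'
    (huT.aestronglyMeasurable) (ae_restrict_of_forall_mem measurableSet_uIoc
      (fun s hs => by simpa using hC s))

lemma UT_sub (huT : Measurable uT) (hC : ∀ x, |uT x| ≤ C) (xc a b : ℝ) : UT uT xc b - UT uT xc a = ∫ s in a..b, uT s := by
  unfold UT
  rw [← intervalIntegral.integral_add_adjacent_intervals
    (uT_intInt huT hC xc a) (uT_intInt huT hC a b)]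
  ring

lemma UT_lip (huT : Measurable uT) (hC : ∀ x, |uT x| ≤ C) (xc a b : ℝ) : |UT uT xc b - UT uT xc a| ≤ C * |b - a| := by
  rw [UT_sub huT hC]
  have := intervalIntegral.norm_integral_le_of_norm_le_const
    (C := C) (f := uT) (a := a) (b := b) (fun s _ => by rw [Real.norm_eq_abs]; exact hC s)
  simpa [Real.norm_eq_abs] using this

lemma UT_cont (huT : Measurable uT) (hC : ∀ x, |uT x| ≤ C) (xc : ℝ) : Continuous (UT uT xc) := by
  rw [Metric.continuous_iff]
  intro b ε hε
  have hC0 : 0 ≤ C := le_trans (abs_nonneg _) (hC 0)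
  refine ⟨ε / (C + 1), by positivity, fun a hab => ?_⟩
  rw [Real.dist_eq]
  calc |UT uT xc a - UT uT xc b| ≤ C * |a - b| := UT_lip huT hC xc b a
    _ ≤ C * dist a b := by rw [Real.dist_eq]
    _ < (C + 1) * (ε / (C + 1)) := by
        have := dist_nonneg (x := a) (y := b)
        nlinarith [hab]
    _ = ε := by
        have h1 : C + 1 ≠ 0 := by positivity
        field_simp

/-- Oleinik: pointwise lower bound relative to right endpoint -/
lemma ole_lower (hf : CondF f) (hT : 0 < T) (hO : Oleinik f T uT) {s b : ℝ} (hsb : s ≤ b) :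
    hInv hf ((s - (b - T * deriv f (uT b))) / T) ≤ uT s := by
  rcases eq_or_lt_of_le hsb with rfl | h
  · have : (s - (s - T * deriv f (uT s))) / T = deriv f (uT s) := by field_simp [ne_of_gt hT]; ring
    rw [this, hInv_g hf]
  · have ho := hO s (b - s) (by linarith)
    rw [show s + (b - s) = b by ring] at ho
    have h1 : (s - (b - T * deriv f (uT b))) / T ≤ deriv f (uT s) := by
      rw [div_le_iff₀ hT]
      nlinarith [(le_div_iff₀ hT).1 ho]
    calc hInv hf ((s - (b - T * deriv f (uT b))) / T)
        ≤ hInv hf (deriv f (uT s)) := (hInv_mono hf).le_iff_le.2 h1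
      _ = uT s := hInv_g hf _

/-- Oleinik: pointwise upper bound relative to left endpoint -/
lemma ole_upper (hf : CondF f) (hT : 0 < T) (hO : Oleinik f T uT) {a s : ℝ} (has : a ≤ s) :
    uT s ≤ hInv hf ((s - (a - T * deriv f (uT a))) / T) := by
  rcases eq_or_lt_of_le has with rfl | h
  · have : (a - (a - T * deriv f (uT a))) / T = deriv f (uT a) := by field_simp [ne_of_gt hT]; ring
    rw [this, hInv_g hf]
  · have ho := hO a (s - a) (by linarith)
    rw [show a + (s - a) = s by ring] at ho
    have h1 : deriv f (uT s) ≤ (s - (a - T * deriv f (uT a))) / T := by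
      rw [le_div_iff₀ hT]
      nlinarith [(le_div_iff₀ hT).1 ho]
    calc uT s = hInv hf (deriv f (uT s)) := (hInv_g hf _).symm
      _ ≤ hInv hf ((s - (a - T * deriv f (uT a))) / T) := (hInv_mono hf).le_iff_le.2 h1

/-- K1 : lower bound of the integral -/
lemma K1 (hf : CondF f) (hT : 0 < T) (huT : Measurable uT) (hC : ∀ x, |uT x| ≤ C) (hO : Oleinik f T uT) (xc : ℝ) {a b : ℝ} (hab : a ≤ b) :
    T * legendre f (deriv f (uT b)) - T * legendre f ((a - (b - T * deriv f (uT b))) / T)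
      ≤ UT uT xc b - UT uT xc a := by
  rw [UT_sub huT hC]
  have h1 : ∫ s in a..b, hInv hf ((s - (b - T * deriv f (uT b))) / T) ≤ ∫ s in a..b, uT s := by
    apply intervalIntegral.integral_mono_on hab
      (((hInv_cont hf).comp (by continuity)).intervalIntegrable a b)
      (uT_intInt huT hC a b)
    intro s hs
    exact ole_lower hf hT hO hs.2
  have h2 := ftc_leg hf hT (b - T * deriv f (uT b)) a b
  rw [show (b - (b - T * deriv f (uT b))) / T = deriv f (uT b) by field_simp; ring] at h2
  linarith [h1, h2.symm.le, h2.le]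

/-- K2 : upper bound of the integral -/
lemma K2 (hf : CondF f) (hT : 0 < T) (huT : Measurable uT) (hC : ∀ x, |uT x| ≤ C) (hO : Oleinik f T uT) (xc : ℝ) {a b : ℝ} (hab : a ≤ b) :
    UT uT xc b - UT uT xc a
      ≤ T * legendre f ((b - (a - T * deriv f (uT a))) / T) - T * legendre f (deriv f (uT a)) := by
  rw [UT_sub huT hC]
  have h1 : ∫ s in a..b, uT s ≤ ∫ s in a..b, hInv hf ((s - (a - T * deriv f (uT a))) / T) := by
    apply intervalIntegral.integral_mono_on hab (uT_intInt huT hC a b)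
      (((hInv_cont hf).comp (by continuity)).intervalIntegrable a b)
    intro s hs
    exact ole_upper hf hT hO hs.1
  have h2 := ftc_leg hf hT (a - T * deriv f (uT a)) a b
  rw [show (a - (a - T * deriv f (uT a))) / T = deriv f (uT a) by field_simp; ring] at h2
  linarith [h1, h2.le]

end Main

section Main2
variable {f : ℝ → ℝ} {T : ℝ} {uT : ℝ → ℝ} {C : ℝ}

lemma pi_div (hT : 0 < T) (x : ℝ) : (x - (x - T * deriv f (uT x))) / T = deriv f (uT x) := by
  field_simp; ring

/-- Lemma A : the value of Uflat at π(x) -/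
lemma lemmaA (hf : CondF f) (hT : 0 < T) (huT : Measurable uT) (hC : ∀ x, |uT x| ≤ C)
    (hO : Oleinik f T uT) (xc x : ℝ) :
    Uflat f T uT xc (x - T * deriv f (uT x))
      = UT uT xc x - T * legendre f (deriv f (uT x)) := by
  have hIG : IsGreatest
      (Set.range fun ξ => UT uT xc ξ - T * legendre f ((ξ - (x - T * deriv f (uT x))) / T))
      (UT uT xc x - T * legendre f (deriv f (uT x))) := by
    constructor
    · refine ⟨x, ?_⟩
      show UT uT xc x - T * legendre f ((x - (x - T * deriv f (uT x))) / T) = _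
      rw [pi_div hT]
    · rintro _ ⟨ξ, rfl⟩
      show UT uT xc ξ - T * legendre f ((ξ - (x - T * deriv f (uT x))) / T) ≤ _
      rcases le_total ξ x with hx | hx
      · have := K1 hf hT huT hC hO xc hx
        linarith
      · have := K2 hf hT huT hC hO xc hx
        linarith
  exact hIG.csSup_eq

/-- lower bound for T * f*((ξ-x)/T) with slope b -/
lemma Tleg_lb (hf : CondF f) (hT : 0 < T) (x ξ b : ℝ) :
    (ξ - x) * b - T * f b ≤ T * legendre f ((ξ - x) / T) := by
  have h := legendre_lb hf ((ξ - x) / T) b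
  have := mul_le_mul_of_nonneg_left h (le_of_lt hT)
  calc (ξ - x) * b - T * f b = T * ((ξ - x) / T * b - f b) := by field_simp
    _ ≤ T * legendre f ((ξ - x) / T) := this

/-- coercive lower bound: T f*((ξ-x)/T) ≥ (K+1)|ξ-x| - M K -/
lemma Tleg_coercive (hf : CondF f) (hT : 0 < T) (K x ξ : ℝ) :
    (K + 1) * |ξ - x| - T * max (f (K + 1)) (f (-(K + 1)))
      ≤ T * legendre f ((ξ - x) / T) := by
  rcases le_total x ξ with h | h
  · have := Tleg_lb hf hT x ξ (K + 1)
    have habs : |ξ - x| = ξ - x := abs_of_nonneg (by linarith)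
    have hm : f (K + 1) ≤ max (f (K + 1)) (f (-(K + 1))) := le_max_left _ _
    rw [habs]
    linarith [mul_le_mul_of_nonneg_left hm (le_of_lt hT)]
  · have := Tleg_lb hf hT x ξ (-(K + 1))
    have habs : |ξ - x| = -(ξ - x) := abs_of_nonpos (by linarith)
    have hm : f (-(K + 1)) ≤ max (f (K + 1)) (f (-(K + 1))) := le_max_right _ _
    rw [habs]
    linarith [mul_le_mul_of_nonneg_left hm (le_of_lt hT)]

lemma Uflat_bddAbove (hf : CondF f) (hT : 0 < T) (huT : Measurable uT)
    (hC : ∀ x, |uT x| ≤ C) (xc x : ℝ) :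
    BddAbove (Set.range fun ξ => UT uT xc ξ - T * legendre f ((ξ - x) / T)) := by
  refine ⟨UT uT xc x + T * max (f (C + 1)) (f (-(C + 1))), ?_⟩
  rintro _ ⟨ξ, rfl⟩
  have h1 : UT uT xc ξ - UT uT xc x ≤ C * |ξ - x| := by
    have := UT_lip huT hC xc x ξ
    calc UT uT xc ξ - UT uT xc x ≤ |UT uT xc ξ - UT uT xc x| := le_abs_self _
      _ ≤ C * |ξ - x| := this
  have h2 := Tleg_coercive hf hT C x ξ
  have := abs_nonneg (ξ - x)
  simp only []
  nlinarith

lemma Uflat_ge (hf : CondF f) (hT : 0 < T) (huT : Measurable uT)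
    (hC : ∀ x, |uT x| ≤ C) (xc x ξ : ℝ) :
    UT uT xc ξ - T * legendre f ((ξ - x) / T) ≤ Uflat f T uT xc x :=
  le_csSup (Uflat_bddAbove hf hT huT hC xc x) ⟨ξ, rfl⟩

/-- real Lipschitz bound -/
lemma lip_bound {Uo : ℝ → ℝ} {K : NNReal} (hL : LipschitzWith K Uo) (a b : ℝ) :
    |Uo a - Uo b| ≤ K * |a - b| := by
  have := hL.dist_le_mul a b
  rwa [Real.dist_eq, Real.dist_eq] at this

lemma HopfLax_bddBelow (hf : CondF f) (hT : 0 < T) {Uo : ℝ → ℝ} {K : NNReal}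
    (hL : LipschitzWith K Uo) (x : ℝ) :
    BddBelow (Set.range fun ξ => Uo ξ + T * legendre f ((x - ξ) / T)) := by
  refine ⟨Uo x - T * max (f ((K:ℝ) + 1)) (f (-((K:ℝ) + 1))), ?_⟩
  rintro _ ⟨ξ, rfl⟩
  have h1 : Uo x - Uo ξ ≤ (K:ℝ) * |ξ - x| := by
    have := lip_bound hL x ξ
    calc Uo x - Uo ξ ≤ |Uo x - Uo ξ| := le_abs_self _
      _ ≤ (K:ℝ) * |x - ξ| := this
      _ = (K:ℝ) * |ξ - x| := by rw [abs_sub_comm]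
  have h2 := Tleg_coercive hf hT (K:ℝ) ξ x
  rw [abs_sub_comm] at h2
  have := abs_nonneg (ξ - x)
  simp only []
  nlinarith

lemma HopfLax_le (hf : CondF f) (hT : 0 < T) {Uo : ℝ → ℝ} {K : NNReal}
    (hL : LipschitzWith K Uo) (x ξ : ℝ) :
    HopfLax f T Uo x ≤ Uo ξ + T * legendre f ((x - ξ) / T) :=
  csInf_le (HopfLax_bddBelow hf hT hL x) ⟨ξ, rfl⟩

/-- existence of a minimizer for Hopf-Lax -/
lemma HopfLax_min (hf : CondF f) (hT : 0 < T) {Uo : ℝ → ℝ} {K : NNReal}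
    (hL : LipschitzWith K Uo) (x : ℝ) :
    ∃ η, (HopfLax f T Uo x = Uo η + T * legendre f ((x - η) / T)) ∧
      ∀ ξ, Uo η + T * legendre f ((x - η) / T) ≤ Uo ξ + T * legendre f ((x - ξ) / T) := by
  set Φ : ℝ → ℝ := fun ξ => Uo ξ + T * legendre f ((x - ξ) / T) with hΦ
  have hΦc : Continuous Φ := by
    apply (hL.continuous).add
    exact (continuous_const.mul ((legendre_cont hf).comp (by continuity)))
  set M : ℝ := T * max (f ((K:ℝ) + 1)) (f (-((K:ℝ) + 1))) with hM
  have hco : ∀ ξ, Uo x + |ξ - x| - M ≤ Φ ξ := by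
    intro ξ
    have h1 : Uo x - Uo ξ ≤ (K:ℝ) * |ξ - x| := by
      have := lip_bound hL x ξ
      calc Uo x - Uo ξ ≤ |Uo x - Uo ξ| := le_abs_self _
        _ ≤ (K:ℝ) * |x - ξ| := this
        _ = (K:ℝ) * |ξ - x| := by rw [abs_sub_comm]
    have h2 := Tleg_coercive hf hT (K:ℝ) ξ x
    rw [abs_sub_comm] at h2
    simp only [hΦ]
    nlinarith [abs_nonneg (ξ - x)]
  set R : ℝ := |Φ x - Uo x + M| + 1 with hR
  have hcomp : IsCompact (Set.Icc (x - R) (x + R)) := isCompact_Icc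
  have hne : (Set.Icc (x - R) (x + R)).Nonempty := by
    refine ⟨x, ?_⟩
    constructor <;> [linarith [abs_nonneg (Φ x - Uo x + M)]; linarith [abs_nonneg (Φ x - Uo x + M)]]
  obtain ⟨η, hη, hmin⟩ := hcomp.exists_isMinOn hne (hΦc.continuousOn)
  have hglobal : ∀ ξ, Φ η ≤ Φ ξ := by
    intro ξ
    by_cases hin : ξ ∈ Set.Icc (x - R) (x + R)
    · exact hmin hin
    · have hR0 : (0:ℝ) < R := by positivity
      have hout : R < |ξ - x| := by
        simp only [Set.mem_Icc, not_and_or, not_le] at hin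
        rcases hin with h | h
        · rw [abs_sub_comm, abs_of_pos (by linarith)]; linarith
        · rw [abs_of_pos (by linarith)]; linarith
      have h1 : Φ x < Φ ξ := by
        have := hco ξ
        have hR1 : Φ x - Uo x + M ≤ |Φ x - Uo x + M| := le_abs_self _
        nlinarith
      have h2 : Φ η ≤ Φ x := hmin ⟨by linarith [abs_nonneg (Φ x - Uo x + M)],
        by linarith [abs_nonneg (Φ x - Uo x + M)]⟩
      linarith
  refine ⟨η, ?_, hglobal⟩
  have : IsLeast (Set.range Φ) (Φ η) := ⟨⟨η, rfl⟩, by rintro _ ⟨ξ, rfl⟩; exact hglobal ξ⟩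
  exact this.csInf_eq

end Main2
section Main3
variable {f : ℝ → ℝ} {T : ℝ} {uT : ℝ → ℝ} {C : ℝ} {Uo : ℝ → ℝ} {K : NNReal}

/-- backward direction -/
lemma backward (hf : CondF f) (hT : 0 < T) (huT : Measurable uT) (hC : ∀ x, |uT x| ≤ C)
    (hO : Oleinik f T uT) (xc : ℝ) (hL : LipschitzWith K Uo)
    (h1 : ∀ x, Uflat f T uT xc x ≤ Uo x)
    (h2 : ∀ x ∈ closure (Set.range fun y => y - T * deriv f (uT y)),
      Uo x = Uflat f T uT xc x) (x : ℝ) :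
    HopfLax f T Uo x = UT uT xc x := by
  apply le_antisymm
  · have hmem : (x - T * deriv f (uT x)) ∈ closure
        (Set.range fun y => y - T * deriv f (uT y)) := subset_closure ⟨x, rfl⟩
    have := HopfLax_le hf hT hL x (x - T * deriv f (uT x))
    rw [h2 _ hmem, lemmaA hf hT huT hC hO xc x, pi_div hT] at this
    linarith
  · apply le_csInf (Set.range_nonempty _)
    rintro _ ⟨η, rfl⟩
    have := Uflat_ge hf hT huT hC xc η x
    have h3 := h1 η
    linarith

/-- forward part (i) -/
lemma forward_i (hf : CondF f) (hT : 0 < T) (huT : Measurable uT) (hC : ∀ x, |uT x| ≤ C)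
    (hL : LipschitzWith K Uo) (xc : ℝ)
    (hS : ∀ x, HopfLax f T Uo x = UT uT xc x) (x : ℝ) :
    Uflat f T uT xc x ≤ Uo x := by
  apply csSup_le (Set.range_nonempty _)
  rintro _ ⟨ξ, rfl⟩
  have := HopfLax_le hf hT hL ξ x
  rw [hS ξ] at this
  linarith

/-- lower bound on the minimizer -/
lemma min_lb (hf : CondF f) (hT : 0 < T) (huT : Measurable uT) (hC : ∀ x, |uT x| ≤ C)
    (hO : Oleinik f T uT) (xc : ℝ) (hL : LipschitzWith K Uo)
    (hS : ∀ x, HopfLax f T Uo x = UT uT xc x) {x' ζ η : ℝ} (hζ : ζ < x')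
    (hval : UT uT xc x' = Uo η + T * legendre f ((x' - η) / T)) :
    x' - T * deriv f (uT ζ) - 2 * (x' - ζ) ≤ η := by
  have hT' := ne_of_gt hT
  have hK2 := K2 hf hT huT hC hO xc (le_of_lt hζ)
  rw [show (x' - (ζ - T * deriv f (uT ζ))) / T = deriv f (uT ζ) + (x' - ζ) / T by
    field_simp; ring] at hK2
  set w := deriv f (uT ζ) with hw
  have hP : UT uT xc ζ ≤ Uo η + T * legendre f ((ζ - η) / T) := by
    have := HopfLax_le hf hT hL ζ η
    rwa [hS ζ] at this
  rw [show (ζ - η) / T = (x' - η) / T - (x' - ζ) / T by field_simp; ring] at hP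
  have g1 := lgrad hf (w + (x' - ζ) / T) w
  have g2 := lgrad hf ((x' - η) / T - (x' - ζ) / T) ((x' - η) / T)
  have hε : (0:ℝ) < x' - ζ := by linarith
  have hεT : (0:ℝ) < (x' - ζ) / T := by positivity
  have key : hInv hf ((x' - η) / T - (x' - ζ) / T) ≤ hInv hf (w + (x' - ζ) / T) := by
    nlinarith [mul_le_mul_of_nonneg_left g1 (le_of_lt hT),
      mul_le_mul_of_nonneg_left g2 (le_of_lt hT),
      mul_div_cancel₀ (x' - ζ) hT', hK2, hP, hval, hεT]
  have key2 := (hInv_mono hf).le_iff_le.1 key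
  have h3 := mul_le_mul_of_nonneg_left key2 (le_of_lt hT)
  have c1 : T * ((x' - ζ) / T) = x' - ζ := mul_div_cancel₀ _ hT'
  have c2 : T * ((x' - η) / T) = x' - η := mul_div_cancel₀ _ hT'
  nlinarith [h3, c1, c2]

/-- upper bound on the minimizer -/
lemma min_ub (hf : CondF f) (hT : 0 < T) (huT : Measurable uT) (hC : ∀ x, |uT x| ≤ C)
    (hO : Oleinik f T uT) (xc : ℝ) (hL : LipschitzWith K Uo)
    (hS : ∀ x, HopfLax f T Uo x = UT uT xc x) {x' ζ η : ℝ} (hζ : x' < ζ)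
    (hval : UT uT xc x' = Uo η + T * legendre f ((x' - η) / T)) :
    η ≤ x' - T * deriv f (uT ζ) + 2 * (ζ - x') := by
  have hT' := ne_of_gt hT
  have hK1 := K1 hf hT huT hC hO xc (le_of_lt hζ)
  rw [show (x' - (ζ - T * deriv f (uT ζ))) / T = deriv f (uT ζ) - (ζ - x') / T by
    field_simp; ring] at hK1
  set w := deriv f (uT ζ) with hw
  have hP : UT uT xc ζ ≤ Uo η + T * legendre f ((ζ - η) / T) := by
    have := HopfLax_le hf hT hL ζ η
    rwa [hS ζ] at this
  rw [show (ζ - η) / T = (x' - η) / T + (ζ - x') / T by field_simp; ring] at hP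
  have g1 := lgrad hf (w - (ζ - x') / T) w
  have g2 := lgrad hf ((x' - η) / T + (ζ - x') / T) ((x' - η) / T)
  have hε : (0:ℝ) < ζ - x' := by linarith
  have hεT : (0:ℝ) < (ζ - x') / T := by positivity
  have key : hInv hf (w - (ζ - x') / T) ≤ hInv hf ((x' - η) / T + (ζ - x') / T) := by
    nlinarith [mul_le_mul_of_nonneg_left g1 (le_of_lt hT),
      mul_le_mul_of_nonneg_left g2 (le_of_lt hT),
      mul_div_cancel₀ (ζ - x') hT', hK1, hP, hval, hεT]
  have key2 := (hInv_mono hf).le_iff_le.1 key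
  have h3 := mul_le_mul_of_nonneg_left key2 (le_of_lt hT)
  have c1 : T * ((ζ - x') / T) = ζ - x' := mul_div_cancel₀ _ hT'
  have c2 : T * ((x' - η) / T) = x' - η := mul_div_cancel₀ _ hT'
  nlinarith [h3, c1, c2]

end Main3
section Main4
variable {f : ℝ → ℝ} {T : ℝ} {uT : ℝ → ℝ} {C : ℝ} {Uo : ℝ → ℝ} {K : NNReal}

lemma onPi (hf : CondF f) (hT : 0 < T) (huT : Measurable uT) (hC : ∀ x, |uT x| ≤ C)
    (hlc : LeftCts uT) (hO : Oleinik f T uT) (xc : ℝ) (hL : LipschitzWith K Uo)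
    (hS : ∀ x, HopfLax f T Uo x = UT uT xc x) (x : ℝ) :
    Uo (x - T * deriv f (uT x)) = Uflat f T uT xc (x - T * deriv f (uT x)) := by
  set xn : ℕ → ℝ := fun n => x - 1 / (n + 1) with hxn
  set zn : ℕ → ℝ := fun n => x - 2 / (n + 1) with hzn
  set wn : ℕ → ℝ := fun n => x - 1 / (2 * (n + 1)) with hwn
  have hn1 : ∀ n : ℕ, (0:ℝ) < 1 / ((n:ℝ) + 1) := fun n => by positivity
  choose η hη hmin using fun n => HopfLax_min hf hT hL (xn n)
  have hval : ∀ n, UT uT xc (xn n) = Uo (η n) + T * legendre f ((xn n - η n) / T) :=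
    fun n => (hS (xn n)).symm.trans (hη n)
  have hzx : ∀ n, zn n < xn n := by
    intro n
    have h := hn1 n
    simp only [hxn, hzn]
    rw [show (2:ℝ) / ((n:ℝ) + 1) = 2 * (1 / ((n:ℝ) + 1)) by ring]
    linarith
  have hwx : ∀ n, xn n < wn n := by
    intro n
    have h := hn1 n
    simp only [hxn, hwn]
    rw [show (1:ℝ) / (2 * ((n:ℝ) + 1)) = (1/2) * (1 / ((n:ℝ) + 1)) by
      rw [one_div, mul_inv]; ring]
    linarith
  have hlb : ∀ n, xn n - T * deriv f (uT (zn n)) - 2 * (xn n - zn n) ≤ η n :=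
    fun n => min_lb hf hT huT hC hO xc hL hS (hzx n) (hval n)
  have hub : ∀ n, η n ≤ xn n - T * deriv f (uT (wn n)) + 2 * (wn n - xn n) :=
    fun n => min_ub hf hT huT hC hO xc hL hS (hwx n) (hval n)
  have h1n : Tendsto (fun n : ℕ => 1 / ((n:ℝ) + 1)) atTop (nhds 0) :=
    tendsto_one_div_add_atTop_nhds_zero_nat
  have hxnl : Tendsto xn atTop (nhds x) := by
    rw [hxn]
    simpa using tendsto_const_nhds.sub h1n
  have hznl : Tendsto zn atTop (nhds x) := by
    have h2 : Tendsto (fun n : ℕ => 2 / ((n:ℝ) + 1)) atTop (nhds 0) := by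
      simpa [div_eq_mul_inv] using h1n.const_mul (2:ℝ)
    rw [hzn]
    simpa using tendsto_const_nhds.sub h2
  have hwnl : Tendsto wn atTop (nhds x) := by
    have h2 : Tendsto (fun n : ℕ => 1 / (2 * ((n:ℝ) + 1))) atTop (nhds 0) := by
      have h3 := h1n.const_mul (1/2 : ℝ)
      rw [mul_zero] at h3
      convert h3 using 2 with n
      rw [one_div, mul_inv]
      ring
    rw [hwn]
    simpa using tendsto_const_nhds.sub h2
  have hzin : ∀ n, zn n ∈ Set.Iio x := fun n => by
    simp only [hzn, Set.mem_Iio]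
    have : (0:ℝ) < 2 / ((n:ℝ) + 1) := by positivity
    linarith
  have hwin : ∀ n, wn n ∈ Set.Iio x := fun n => by
    simp only [hwn, Set.mem_Iio]
    have : (0:ℝ) < 1 / (2 * ((n:ℝ) + 1)) := by positivity
    linarith
  have hgz : Tendsto (fun n => deriv f (uT (zn n))) atTop (nhds (deriv f (uT x))) :=
    ((g_cont hf).tendsto _).comp ((hlc x).comp
      (tendsto_nhdsWithin_of_tendsto_nhds_of_eventually_within _ hznl
        (Filter.Eventually.of_forall hzin)))
  have hgw : Tendsto (fun n => deriv f (uT (wn n))) atTop (nhds (deriv f (uT x))) :=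
    ((g_cont hf).tendsto _).comp ((hlc x).comp
      (tendsto_nhdsWithin_of_tendsto_nhds_of_eventually_within _ hwnl
        (Filter.Eventually.of_forall hwin)))
  have hlbl : Tendsto (fun n => xn n - T * deriv f (uT (zn n)) - 2 * (xn n - zn n)) atTop
      (nhds (x - T * deriv f (uT x))) := by
    have := (hxnl.sub (hgz.const_mul T)).sub ((hxnl.sub hznl).const_mul 2)
    simpa [mul_comm] using this
  have hubl : Tendsto (fun n => xn n - T * deriv f (uT (wn n)) + 2 * (wn n - xn n)) atTop
      (nhds (x - T * deriv f (uT x))) := by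
    have := (hxnl.sub (hgw.const_mul T)).add ((hwnl.sub hxnl).const_mul 2)
    simpa [mul_comm] using this
  have hηl : Tendsto η atTop (nhds (x - T * deriv f (uT x))) :=
    tendsto_of_tendsto_of_tendsto_of_le_of_le hlbl hubl hlb hub
  have hUTl : Tendsto (fun n => UT uT xc (xn n)) atTop (nhds (UT uT xc x)) :=
    ((UT_cont huT hC xc).tendsto _).comp hxnl
  have hRl : Tendsto (fun n => Uo (η n) + T * legendre f ((xn n - η n) / T)) atTop
      (nhds (Uo (x - T * deriv f (uT x))
        + T * legendre f ((x - (x - T * deriv f (uT x))) / T))) := by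
    refine Tendsto.add ((hL.continuous.tendsto _).comp hηl) ?_
    exact (((legendre_cont hf).tendsto _).comp ((hxnl.sub hηl).div_const T)).const_mul T
  have heq : UT uT xc x = Uo (x - T * deriv f (uT x))
      + T * legendre f ((x - (x - T * deriv f (uT x))) / T) := by
    refine tendsto_nhds_unique hUTl ?_
    simp only [hval]
    exact hRl
  rw [pi_div hT] at heq
  rw [lemmaA hf hT huT hC hO xc x]
  linarith

end Main4
section Main5
variable {f : ℝ → ℝ} {T : ℝ} {uT : ℝ → ℝ} {C : ℝ} {Uo : ℝ → ℝ} {K : NNReal}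

lemma pi_mono (hf : CondF f) (hT : 0 < T) (hO : Oleinik f T uT) :
    Monotone (fun y => y - T * deriv f (uT y)) := by
  intro a b hab
  rcases eq_or_lt_of_le hab with rfl | h
  · exact le_rfl
  · have ho := hO a (b - a) (by linarith)
    rw [show a + (b - a) = b by ring] at ho
    have := (le_div_iff₀ hT).1 ho
    simp only []
    nlinarith

lemma onClosure (hf : CondF f) (hT : 0 < T) (huT : Measurable uT) (hC : ∀ x, |uT x| ≤ C)
    (hlc : LeftCts uT) (hO : Oleinik f T uT) (xc : ℝ) (hL : LipschitzWith K Uo)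
    (hS : ∀ x, HopfLax f T Uo x = UT uT xc x) (x : ℝ)
    (hx : x ∈ closure (Set.range fun y => y - T * deriv f (uT y))) :
    Uo x = Uflat f T uT xc x := by
  have hPi := onPi hf hT huT hC hlc hO xc hL hS
  have hge := forward_i hf hT huT hC hL xc hS x
  have hmono := pi_mono hf hT hO
  refine le_antisymm ?_ hge
  by_cases hxr : x ∈ Set.range fun y => y - T * deriv f (uT y)
  · obtain ⟨y, rfl⟩ := hxr
    exact (hPi y).le
  · -- x is a limit from the right of the range
    set S : Set ℝ := {y : ℝ | y - T * deriv f (uT y) ≤ x} with hSdef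
    have hgC : ∀ y, deriv f (uT y) ≤ deriv f C := fun y =>
      (g_mono hf).le_iff_le.2 (le_of_abs_le (hC y))
    have hgC' : ∀ y, deriv f (-C) ≤ deriv f (uT y) := fun y =>
      (g_mono hf).le_iff_le.2 (neg_le_of_abs_le (hC y))
    have hSne : S.Nonempty := by
      refine ⟨x + T * deriv f (-C), ?_⟩
      simp only [hSdef, Set.mem_setOf_eq]
      nlinarith [hgC' (x + T * deriv f (-C))]
    have hSbdd : BddAbove S := by
      refine ⟨x + T * deriv f C, ?_⟩
      intro y hy
      simp only [hSdef, Set.mem_setOf_eq] at hy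
      nlinarith [hgC y]
    set ys := sSup S with hys
    have hmemle : ∀ y, y < ys → y - T * deriv f (uT y) ≤ x := by
      intro y hy
      obtain ⟨y', hy'S, hyy'⟩ := exists_lt_of_lt_csSup hSne hy
      exact le_trans (hmono (le_of_lt hyy')) hy'S
    have hπys : ys - T * deriv f (uT ys) ≤ x := by
      -- left continuity
      set yn : ℕ → ℝ := fun n => ys - 1 / (n + 1) with hyn
      have hn1 : ∀ n : ℕ, (0:ℝ) < 1 / ((n:ℝ) + 1) := fun n => by positivity
      have h1n : Tendsto (fun n : ℕ => 1 / ((n:ℝ) + 1)) atTop (nhds 0) :=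
        tendsto_one_div_add_atTop_nhds_zero_nat
      have hynl : Tendsto yn atTop (nhds ys) := by
        rw [hyn]; simpa using tendsto_const_nhds.sub h1n
      have hyin : ∀ n, yn n ∈ Set.Iio ys := fun n => by
        simp only [hyn, Set.mem_Iio]; linarith [hn1 n]
      have hgl : Tendsto (fun n => yn n - T * deriv f (uT (yn n))) atTop
          (nhds (ys - T * deriv f (uT ys))) := by
        refine hynl.sub (Tendsto.const_mul T (((g_cont hf).tendsto _).comp ((hlc ys).comp
          (tendsto_nhdsWithin_of_tendsto_nhds_of_eventually_within _ hynl
            (Filter.Eventually.of_forall hyin)))))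
      exact le_of_tendsto hgl (Filter.Eventually.of_forall fun n => hmemle _ (hyin n))
    have hπyslt : ys - T * deriv f (uT ys) < x :=
      lt_of_le_of_ne hπys fun h => hxr ⟨ys, h⟩
    have hgtx : ∀ y, ys < y → x < y - T * deriv f (uT y) := by
      intro y hy
      by_contra hcon
      push_neg at hcon
      exact absurd (le_csSup hSbdd hcon) (not_le.2 hy)
    -- sequence from the closure
    obtain ⟨z, hzm, hzl⟩ := mem_closure_iff_seq_limit.1 hx
    choose y hy using hzm
    have hy' : ∀ n, y n - T * deriv f (uT (y n)) = z n := hy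
    have hyngt : ∀ᶠ n in atTop, ys < y n := by
      filter_upwards [hzl.eventually (eventually_gt_nhds hπyslt)] with n hn
      by_contra hcon
      push_neg at hcon
      have h6 := hmono hcon
      simp only [] at h6
      rw [hy' n] at h6
      linarith
    have hyntend : Tendsto y atTop (nhds ys) := by
      rw [tendsto_order]
      constructor
      · intro a ha
        filter_upwards [hyngt] with n hn
        linarith
      · intro b hb
        have hmid : ys < (ys + b) / 2 := by linarith
        have hmid2 : (ys + b) / 2 < b := by linarith
        have hx2 := hgtx _ hmid
        filter_upwards [hzl.eventually (eventually_lt_nhds hx2)] with n hn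
        by_contra hcon
        push_neg at hcon
        have h5 : (ys + b) / 2 ≤ y n := by linarith
        have h6 := hmono h5
        simp only [] at h6
        rw [hy' n] at h6
        linarith
    have hgyl : Tendsto (fun n => deriv f (uT (y n))) atTop (nhds ((ys - x) / T)) := by
      have heqn : ∀ n, deriv f (uT (y n)) = (y n - z n) / T := by
        intro n
        have h6 := hy' n
        field_simp
        linarith
      rw [show (fun n => deriv f (uT (y n))) = fun n => (y n - z n) / T from funext heqn]
      exact (hyntend.sub hzl).div_const T
    have hvals : ∀ n, Uo (z n) = UT uT xc (y n) - T * legendre f (deriv f (uT (y n))) := by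
      intro n
      rw [← hy' n, hPi (y n), lemmaA hf hT huT hC hO xc (y n)]
    have hUol : Tendsto (fun n => Uo (z n)) atTop (nhds (Uo x)) :=
      (hL.continuous.tendsto _).comp hzl
    have hUol2 : Tendsto (fun n => Uo (z n)) atTop
        (nhds (UT uT xc ys - T * legendre f ((ys - x) / T))) := by
      rw [show (fun n => Uo (z n))
          = fun n => UT uT xc (y n) - T * legendre f (deriv f (uT (y n))) from funext hvals]
      exact (((UT_cont huT hC xc).tendsto _).comp hyntend).sub
        (Tendsto.const_mul T (((legendre_cont hf).tendsto _).comp hgyl))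
    have heq : Uo x = UT uT xc ys - T * legendre f ((ys - x) / T) :=
      tendsto_nhds_unique hUol hUol2
    rw [heq]
    exact Uflat_ge hf hT huT hC xc x ys

end Main5

theorem stmt_13 (f : ℝ → ℝ) (hf : CondF f) (T : ℝ) (hT : 0 < T)
    (J : Set ℝ) (hJne : J.Nonempty) (hJcl : IsClosed J) (hJoc : J.OrdConnected)
    (uT : ℝ → ℝ) (huT : Measurable uT) (C : ℝ) (hC : ∀ x, |uT x| ≤ C)
    (hlc : LeftCts uT) (huTJ : ∀ x, uT x ∈ J) (hO : Oleinik f T uT) (xc : ℝ)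
    (Uo : ℝ → ℝ) (hUoLip : ∃ K, LipschitzWith K Uo) :
    ((∀ x : ℝ, HopfLax f T Uo x = UT uT xc x) ∧ (∀ᵐ x ∂volume, deriv Uo x ∈ J)) ↔
      ((∀ x : ℝ, Uflat f T uT xc x ≤ Uo x) ∧
        (∀ x ∈ closure (Set.range fun y => y - T * deriv f (uT y)),
          Uo x = Uflat f T uT xc x) ∧
        (∀ᵐ x ∂volume, deriv Uo x ∈ J)) := by
  obtain ⟨K, hL⟩ := hUoLip
  constructor
  · rintro ⟨hS, hae⟩
    exact ⟨forward_i hf hT huT hC hL xc hS,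
      fun x hx => onClosure hf hT huT hC hlc hO xc hL hS x hx, hae⟩
  · rintro ⟨h1, h2, hae⟩
    exact ⟨backward hf hT huT hC hO xc hL h1 h2, hae⟩
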